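/- Let ι be a finite nonempty type, let G : ι → ι → ℝ be a generator matrix, let ε > 0, let f̂ : ι → ℝ, let A ⊆ ι, and let φ : ι → ℝ satisfy φ i > 0 for all i and φ i = 1 for all i ∈ A. Set W i = −ε·log(φ i). Then φ satisfies the discrete Feynman–Kac equation ∑_j G i j · φ j − ε⁻¹·f̂ i · φ i = 0 for all i ∉ A if and only if W satisfies the discrete Bellman equation: W i = 0 for all i ∈ A and, for every i ∉ A, the infimum over positive v : ι → ℝ of ∑_j G^v i j · W j + k^v i + f̂ i equals 0; moreover, in that case the infimum is attained at v = φ. -/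

import Mathlib

/-- The tilted generator `G^v`: `G^v i j = G i j · v j / v i` for `j ≠ i`, and
`G^v i i = -∑_{j ≠ i} G^v i j`. -/
noncomputable def tiltedGen {ι : Type*} [Fintype ι] [DecidableEq ι]
    (G : ι → ι → ℝ) (v : ι → ℝ) (i j : ι) : ℝ :=
  if j = i then -∑ k ∈ Finset.univ.erase i, G i k * v k / v i
  else G i j * v j / v i

/-- The running cost `k^v i = ε ∑_{j ≠ i} G i j ((v j / v i)(log(v j / v i) - 1) + 1)`. -/
noncomputable def runningCost {ι : Type*} [Fintype ι] [DecidableEq ι]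
    (ε : ℝ) (G : ι → ι → ℝ) (v : ι → ℝ) (i : ι) : ℝ :=
  ε * ∑ j ∈ Finset.univ.erase i, G i j * ((v j / v i) * (Real.log (v j / v i) - 1) + 1)

private lemma keyIneq {ε c r : ℝ} (hε : 0 < ε) (hc : 0 < c) (hr : 0 < r) :
    ε * (1 - c) ≤ r * (-(ε * Real.log c)) + ε * (r * (Real.log r - 1) + 1) := by
  have h1 : Real.log (c / r) ≤ c / r - 1 := Real.log_le_sub_one_of_pos (div_pos hc hr)
  rw [Real.log_div hc.ne' hr.ne'] at h1
  have h2 : r * (Real.log c - Real.log r) ≤ r * (c / r - 1) :=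
    mul_le_mul_of_nonneg_left h1 hr.le
  have h3 : r * (c / r - 1) = c - r := by field_simp
  rw [h3] at h2
  nlinarith [mul_le_mul_of_nonneg_left h2 hε.le]

/-- For a generator matrix `G`, `ε > 0`, `f̂ : ι → ℝ`, `A ⊆ ι`, and `φ > 0`
with `φ = 1` on `A`, setting `W = -ε log φ`: `φ` satisfies the discrete Feynman–Kac
equation `∑_j G i j φ j - ε⁻¹ f̂ i φ i = 0` for all `i ∉ A` iff `W` satisfies the
discrete Bellman equation (`W = 0` on `A` and, for every `i ∉ A`, the infimum over
positive `v` of `∑_j G^v i j W j + k^v i + f̂ i` equals `0`); moreover, in that case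
the infimum is attained at `v = φ`. -/
theorem feynman_kac_iff_bellman {ι : Type*} [Fintype ι] [Nonempty ι] [DecidableEq ι]
    (G : ι → ι → ℝ) (hG1 : ∀ i j, i ≠ j → 0 ≤ G i j) (hG2 : ∀ i, ∑ j, G i j = 0)
    (ε : ℝ) (hε : 0 < ε) (fhat : ι → ℝ) (A : Set ι)
    (φ : ι → ℝ) (hφ : ∀ i, 0 < φ i) (hφA : ∀ i ∈ A, φ i = 1)
    (W : ι → ℝ) (hW : W = fun i => -ε * Real.log (φ i)) :
    ((∀ i ∉ A, ∑ j, G i j * φ j - ε⁻¹ * fhat i * φ i = 0) ↔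
      ((∀ i ∈ A, W i = 0) ∧ ∀ i ∉ A,
        sInf {r : ℝ | ∃ v : ι → ℝ, (∀ j, 0 < v j) ∧
          r = ∑ j, tiltedGen G v i j * W j + runningCost ε G v i + fhat i} = 0)) ∧
    ((∀ i ∉ A, ∑ j, G i j * φ j - ε⁻¹ * fhat i * φ i = 0) →
      ∀ i ∉ A,
        IsLeast {r : ℝ | ∃ v : ι → ℝ, (∀ j, 0 < v j) ∧
            r = ∑ j, tiltedGen G v i j * W j + runningCost ε G v i + fhat i}
          (∑ j, tiltedGen G φ i j * W j + runningCost ε G φ i + fhat i)) := by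
  -- difference of W
  have hWdiff : ∀ j i : ι, W j - W i = -(ε * Real.log (φ j / φ i)) := by
    intro j i
    rw [hW, Real.log_div (hφ j).ne' (hφ i).ne']
    ring
  -- rewrite the objective as a sum over `erase i`
  have hsum : ∀ (v : ι → ℝ) (i : ι),
      ∑ j, tiltedGen G v i j * W j + runningCost ε G v i + fhat i
      = ∑ j ∈ Finset.univ.erase i,
          (G i j * v j / v i * (W j - W i)
            + ε * (G i j * ((v j / v i) * (Real.log (v j / v i) - 1) + 1)))
        + fhat i := by
    intro v i
    have h1 : ∑ j, tiltedGen G v i j * W j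
        = tiltedGen G v i i * W i + ∑ j ∈ Finset.univ.erase i, tiltedGen G v i j * W j :=
      (Finset.add_sum_erase _ _ (Finset.mem_univ i)).symm
    have h2 : ∀ j ∈ Finset.univ.erase i,
        tiltedGen G v i j * W j = G i j * v j / v i * W j := by
      intro j hj
      rw [tiltedGen, if_neg (Finset.ne_of_mem_erase hj)]
    have h3 : tiltedGen G v i i = -∑ k ∈ Finset.univ.erase i, G i k * v k / v i := by
      rw [tiltedGen, if_pos rfl]
    rw [h1, Finset.sum_congr rfl h2, h3, runningCost, Finset.mul_sum]
    rw [Finset.sum_add_distrib]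
    have h4 : ∑ j ∈ Finset.univ.erase i, G i j * v j / v i * (W j - W i)
        = (∑ j ∈ Finset.univ.erase i, G i j * v j / v i * W j)
          - (∑ j ∈ Finset.univ.erase i, G i j * v j / v i) * W i := by
      rw [Finset.sum_mul, ← Finset.sum_sub_distrib]
      exact Finset.sum_congr rfl fun j _ => by ring
    rw [h4]
    ring
  -- value at v = φ
  have hphi_term : ∀ i, ∀ j ∈ Finset.univ.erase i,
      G i j * φ j / φ i * (W j - W i)
        + ε * (G i j * ((φ j / φ i) * (Real.log (φ j / φ i) - 1) + 1))
      = ε * (G i j * (1 - φ j / φ i)) := by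
    intro i j _
    rw [hWdiff j i]
    ring
  have hLphi : ∀ i, ∑ j, tiltedGen G φ i j * W j + runningCost ε G φ i + fhat i
      = ∑ j ∈ Finset.univ.erase i, ε * (G i j * (1 - φ j / φ i)) + fhat i := by
    intro i
    rw [hsum φ i]
    congr 1
    exact Finset.sum_congr rfl (hphi_term i)
  -- φ gives the least element
  have hleast : ∀ i : ι, IsLeast {r : ℝ | ∃ v : ι → ℝ, (∀ j, 0 < v j) ∧
      r = ∑ j, tiltedGen G v i j * W j + runningCost ε G v i + fhat i}
      (∑ j, tiltedGen G φ i j * W j + runningCost ε G φ i + fhat i) := by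
    intro i
    constructor
    · exact ⟨φ, hφ, rfl⟩
    · rintro r ⟨v, hv, rfl⟩
      rw [hLphi i, hsum v i]
      refine add_le_add ?_ le_rfl
      apply Finset.sum_le_sum
      intro j hj
      have hij : i ≠ j := (Finset.ne_of_mem_erase hj).symm
      have key := keyIneq hε (div_pos (hφ j) (hφ i)) (div_pos (hv j) (hv i))
      have h := mul_le_mul_of_nonneg_left key (hG1 i j hij)
      rw [hWdiff j i]
      calc ε * (G i j * (1 - φ j / φ i)) = G i j * (ε * (1 - φ j / φ i)) := by ring
        _ ≤ G i j * (v j / v i * -(ε * Real.log (φ j / φ i))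
              + ε * (v j / v i * (Real.log (v j / v i) - 1) + 1)) := h
        _ = G i j * v j / v i * -(ε * Real.log (φ j / φ i))
              + ε * (G i j * (v j / v i * (Real.log (v j / v i) - 1) + 1)) := by ring
  -- explicit value of the minimum
  have hval : ∀ i, ∑ j, tiltedGen G φ i j * W j + runningCost ε G φ i + fhat i
      = (-ε / φ i) * (∑ j, G i j * φ j - ε⁻¹ * fhat i * φ i) := by
    intro i
    rw [hLphi i]
    have e1 : ∑ j, G i j = G i i + ∑ j ∈ Finset.univ.erase i, G i j :=
      (Finset.add_sum_erase _ _ (Finset.mem_univ i)).symm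
    have e2 : ∑ j, G i j * φ j
        = G i i * φ i + ∑ j ∈ Finset.univ.erase i, G i j * φ j :=
      (Finset.add_sum_erase _ _ (Finset.mem_univ i)).symm
    have e3 : ∑ j ∈ Finset.univ.erase i, G i j = -G i i := by
      have := hG2 i
      rw [e1] at this
      linarith
    have e4 : ∀ j ∈ Finset.univ.erase i,
        ε * (G i j * (1 - φ j / φ i)) = ε * G i j - (ε / φ i) * (G i j * φ j) := by
      intro j _
      field_simp
    rw [Finset.sum_congr rfl e4, Finset.sum_sub_distrib, ← Finset.mul_sum,
      ← Finset.mul_sum, e3, e2]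
    have hφi := (hφ i).ne'
    have hεne := hε.ne'
    field_simp
    ring
  constructor
  · constructor
    · intro h
      constructor
      · intro i hi
        rw [hW]
        simp [hφA i hi]
      · intro i hi
        rw [(hleast i).csInf_eq, hval i, h i hi, mul_zero]
    · rintro ⟨_, h2⟩ i hi
      have := h2 i hi
      rw [(hleast i).csInf_eq, hval i] at this
      have hne : (-ε / φ i) ≠ 0 := by
        apply div_ne_zero (by linarith) (hφ i).ne'
      exact (mul_eq_zero.mp this).resolve_left hne
  · intro _ i _
    exact hleast i
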